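/- Let X be a pointed metric space and F a Banach space. If T_n : X → F are Lipschitz nuclear operators with Σ_{n=1}^∞ N(T_n) < ∞ (where N denotes the Lipschitz nuclear norm), then the series T = Σ_{n=1}^∞ T_n converges to a Lipschitz nuclear operator T : X → F with N(T) ≤ Σ_{n=1}^∞ N(T_n). Consequently, the space of Lipschitz nuclear operators from X to F with the norm N is a Banach space. -/

import Mathlib

open scoped NNReal

/-- The Lipschitz constant of a map between (pseudo)metric spaces. -/
noncomputable def lipConst {X Y : Type*} [PseudoMetricSpace X] [PseudoMetricSpace Y]
    (f : X → Y) : ℝ≥0 := sInf {K | LipschitzWith K f}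

/-- `T` is Lipschitz nuclear: `T x = ∑' j, g j x • e j` with `g j ∈ X^#` and
`∑ Lip(g j) ‖e j‖ < ∞`. -/
def IsLipNuclear {X F : Type*} [MetricSpace X] [Zero X]
    [NormedAddCommGroup F] [NormedSpace ℝ F] (T : X → F) : Prop :=
  ∃ (g : ℕ → X → ℝ) (e : ℕ → F),
    (∀ j, LipschitzWith (lipConst (g j)) (g j)) ∧ (∀ j, g j 0 = 0) ∧
    (Summable fun j => (lipConst (g j) : ℝ) * ‖e j‖) ∧
    ∀ x, HasSum (fun j => g j x • e j) (T x)

/-- The Lipschitz nuclear norm: infimum of `∑ Lip(g j) ‖e j‖` over all nuclear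
representations. -/
noncomputable def nuclearNorm {X F : Type*} [MetricSpace X] [Zero X]
    [NormedAddCommGroup F] [NormedSpace ℝ F] (T : X → F) : ℝ :=
  sInf {c | ∃ (g : ℕ → X → ℝ) (e : ℕ → F),
    (∀ j, LipschitzWith (lipConst (g j)) (g j)) ∧ (∀ j, g j 0 = 0) ∧
    (∀ x, HasSum (fun j => g j x • e j) (T x)) ∧
    HasSum (fun j => (lipConst (g j) : ℝ) * ‖e j‖) c}

section Aux

variable {X F : Type*} [MetricSpace X] [Zero X] [NormedAddCommGroup F] [NormedSpace ℝ F]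

/-- The set of values of nuclear representations. -/
def nucSet (T : X → F) : Set ℝ :=
  {c | ∃ (g : ℕ → X → ℝ) (e : ℕ → F),
    (∀ j, LipschitzWith (lipConst (g j)) (g j)) ∧ (∀ j, g j 0 = 0) ∧
    (∀ x, HasSum (fun j => g j x • e j) (T x)) ∧
    HasSum (fun j => (lipConst (g j) : ℝ) * ‖e j‖) c}

lemma nuclearNorm_eq_sInf (T : X → F) : nuclearNorm T = sInf (nucSet T) := rfl

lemma nucSet_nonneg {T : X → F} {c : ℝ} (hc : c ∈ nucSet T) : 0 ≤ c := by
  obtain ⟨g, e, -, -, -, h⟩ := hc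
  exact h.nonneg fun j => mul_nonneg (lipConst (g j)).coe_nonneg (norm_nonneg _)

lemma nucSet_bddBelow (T : X → F) : BddBelow (nucSet T) :=
  ⟨0, fun _ hc => nucSet_nonneg hc⟩

lemma nucSet_nonempty_of_isLipNuclear {T : X → F} (h : IsLipNuclear T) :
    (nucSet T).Nonempty := by
  obtain ⟨g, e, h1, h2, h3, h4⟩ := h
  exact ⟨_, g, e, h1, h2, h4, h3.hasSum⟩

lemma isLipNuclear_of_mem_nucSet {T : X → F} {c : ℝ} (hc : c ∈ nucSet T) :
    IsLipNuclear T := by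
  obtain ⟨g, e, h1, h2, h3, h4⟩ := hc
  exact ⟨g, e, h1, h2, h4.summable, h3⟩

set_option maxHeartbeats 1000000 in
/-- Key construction: for any `ε > 0`, summability and a cheap representation of the sum. -/
lemma key {X F : Type*} [MetricSpace X] [Zero X]
    [NormedAddCommGroup F] [NormedSpace ℝ F] [CompleteSpace F]
    (T : ℕ → X → F) (hT : ∀ n, IsLipNuclear (T n))
    (hsum : Summable fun n => nuclearNorm (T n)) {ε : ℝ} (hε : 0 < ε) :
    (∀ x, Summable fun n => T n x) ∧
    ∃ c ∈ nucSet (fun x => ∑' n, T n x), c ≤ (∑' n, nuclearNorm (T n)) + ε := by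
  -- near-optimal representations
  have hmem : ∀ n, ∃ c ∈ nucSet (T n), c < nuclearNorm (T n) + ε / 2 / 2 ^ n := fun n =>
    Real.lt_sInf_add_pos (nucSet_nonempty_of_isLipNuclear (hT n)) (by positivity)
  choose c hc hclt using hmem
  have hcrep : ∀ n, ∃ (g : ℕ → X → ℝ) (e : ℕ → F),
      (∀ j, LipschitzWith (lipConst (g j)) (g j)) ∧ (∀ j, g j 0 = 0) ∧
      (∀ x, HasSum (fun j => g j x • e j) (T n x)) ∧
      HasSum (fun j => (lipConst (g j) : ℝ) * ‖e j‖) (c n) := hc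
  choose G E hLip h0 hRep hHS using hcrep
  -- summability of c
  have hc0 : ∀ n, 0 ≤ c n := fun n => nucSet_nonneg (hc n)
  have hcS : Summable c := by
    refine Summable.of_nonneg_of_le hc0 (fun n => (hclt n).le) ?_
    exact hsum.add (summable_geometric_two' ε)
  have hctsum : ∑' n, c n ≤ (∑' n, nuclearNorm (T n)) + ε := by
    calc ∑' n, c n ≤ ∑' n, (nuclearNorm (T n) + ε / 2 / 2 ^ n) :=
          Summable.tsum_le_tsum (fun n => (hclt n).le) hcS (hsum.add (summable_geometric_two' ε))
      _ = (∑' n, nuclearNorm (T n)) + ∑' n, ε / 2 / 2 ^ n :=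
          Summable.tsum_add hsum (summable_geometric_two' ε)
      _ = (∑' n, nuclearNorm (T n)) + ε := by rw [tsum_geometric_two']
  -- double family of nuclear weights
  set a : ℕ × ℕ → ℝ := fun p => (lipConst (G p.1 p.2) : ℝ) * ‖E p.1 p.2‖ with ha
  have ha0 : ∀ p, 0 ≤ a p := fun p =>
    mul_nonneg (lipConst (G p.1 p.2)).coe_nonneg (norm_nonneg _)
  have haS : Summable a := by
    rw [summable_prod_of_nonneg ha0]
    refine ⟨fun n => (hHS n).summable, ?_⟩
    have : ∀ n, ∑' j, a (n, j) = c n := fun n => (hHS n).tsum_eq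
    simpa [this] using hcS
  have haHS : HasSum a (∑' n, c n) := by
    have h1 := haS.hasSum
    have h2 : HasSum c (∑' p, a p) :=
      h1.prod_fiberwise (fun n => hHS n)
    rwa [← h2.tsum_eq] at h1
  -- pointwise double family
  have hbS : ∀ x, Summable fun p : ℕ × ℕ => G p.1 p.2 x • E p.1 p.2 := by
    intro x
    refine Summable.of_norm_bounded (haS.mul_right (dist x 0)) ?_
    intro p
    rw [norm_smul, ha]
    have hg : |G p.1 p.2 x| ≤ (lipConst (G p.1 p.2) : ℝ) * dist x 0 := by
      have := (hLip p.1 p.2).dist_le_mul x 0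
      rwa [h0 p.1 p.2, Real.dist_eq, sub_zero] at this
    calc ‖G p.1 p.2 x‖ * ‖E p.1 p.2‖ ≤ ((lipConst (G p.1 p.2) : ℝ) * dist x 0) * ‖E p.1 p.2‖ := by
          exact mul_le_mul_of_nonneg_right hg (norm_nonneg _)
      _ = (lipConst (G p.1 p.2) : ℝ) * ‖E p.1 p.2‖ * dist x 0 := by ring
  have hbHS : ∀ x, HasSum (fun n => T n x) (∑' p : ℕ × ℕ, G p.1 p.2 x • E p.1 p.2) := by
    intro x
    exact (hbS x).hasSum.prod_fiberwise (fun n => hRep n x)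
  have hTsummable : ∀ x, Summable fun n => T n x := fun x => (hbHS x).summable
  refine ⟨hTsummable, ∑' n, c n, ?_, hctsum⟩
  -- reindex via a pairing equivalence
  set k : ℕ ≃ ℕ × ℕ := (Denumerable.eqv (ℕ × ℕ)).symm with hk
  refine ⟨fun j => G (k j).1 (k j).2, fun j => E (k j).1 (k j).2,
    fun j => hLip (k j).1 (k j).2, fun j => h0 (k j).1 (k j).2, ?_, ?_⟩
  · intro x
    have heq : (∑' n, T n x) = ∑' p : ℕ × ℕ, G p.1 p.2 x • E p.1 p.2 := (hbHS x).tsum_eq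
    show HasSum (fun j => G (k j).1 (k j).2 x • E (k j).1 (k j).2) (∑' n, T n x)
    rw [heq]
    exact (k.hasSum_iff).2 (hbS x).hasSum
  · have : HasSum (a ∘ k) (∑' n, c n) := (k.hasSum_iff).2 haHS
    exact this

end Aux

theorem stmt13 {X F : Type*} [MetricSpace X] [Zero X]
    [NormedAddCommGroup F] [NormedSpace ℝ F] [CompleteSpace F]
    (T : ℕ → X → F) (hT : ∀ n, IsLipNuclear (T n))
    (hsum : Summable fun n => nuclearNorm (T n)) :
    (∀ x, Summable fun n => T n x) ∧
    IsLipNuclear (fun x => ∑' n, T n x) ∧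
    nuclearNorm (fun x => ∑' n, T n x) ≤ ∑' n, nuclearNorm (T n) := by
  obtain ⟨hS, c, hc, -⟩ := key T hT hsum one_pos
  refine ⟨hS, isLipNuclear_of_mem_nucSet hc, ?_⟩
  refine le_of_forall_pos_le_add ?_
  intro ε hε
  obtain ⟨-, c', hc', hle⟩ := key T hT hsum hε
  calc nuclearNorm (fun x => ∑' n, T n x) ≤ c' :=
        csInf_le (nucSet_bddBelow _) hc'
    _ ≤ _ := hle
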